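/- Let n ≥ 1, let f be a nonzero polynomial in n complex variables with f(0) = 0, let w₁, …, wₙ be positive integers (weights assigned to the variables), and let m be the minimum, over all monomials x₁^{α₁}⋯xₙ^{αₙ} occurring with nonzero coefficient in f, of the weighted degree w₁α₁ + ⋯ + wₙαₙ. Then for every real number λ > (w₁ + ⋯ + wₙ)/m and every open neighborhood U of the origin in ℂⁿ, the function z ↦ |f(z)|^{−2λ} is not integrable on U with respect to Lebesgue measure on ℂⁿ ≅ ℝ^{2n}. -/

import Mathlib

open MeasureTheory MvPolynomial
open scoped ENNReal NNReal

lemma mv_zero_set_null : ∀ (n : ℕ) (f : MvPolynomial (Fin n) ℂ), f ≠ 0 →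
    volume {z : Fin n → ℂ | MvPolynomial.eval z f = 0} = 0 := by
  intro n
  induction n with
  | zero =>
    intro f hf
    have hsupp : f.support.Nonempty := MvPolynomial.support_nonempty.mpr hf
    obtain ⟨d, hd⟩ := hsupp
    have hd0 : d = 0 := Finsupp.ext fun a => a.elim0
    subst hd0
    convert measure_empty (μ := (volume : Measure (Fin 0 → ℂ)))
    rw [Set.eq_empty_iff_forall_notMem]
    intro z hz
    have hz' : MvPolynomial.eval z f = 0 := hz
    have hss : f.support = {(0 : Fin 0 →₀ ℕ)} := by
      refine Finset.eq_singleton_iff_unique_mem.mpr ⟨hd, fun x _ => Finsupp.ext fun a => a.elim0⟩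
    rw [MvPolynomial.eval_eq', hss, Finset.sum_singleton] at hz'
    simp only [Finset.univ_eq_empty, Finset.prod_empty, mul_one] at hz'
    exact (MvPolynomial.mem_support_iff.mp hd) hz'
  | succ n ih =>
    intro f hf
    set g : Polynomial (MvPolynomial (Fin n) ℂ) := MvPolynomial.finSuccEquiv ℂ n f with hg
    have hgne : g ≠ 0 := by
      simp only [hg, ne_eq, EmbeddingLike.map_eq_zero_iff]; exact hf
    have hconsC : Continuous fun p : (Fin n → ℂ) × ℂ => (Fin.cons p.2 p.1 : Fin (n+1) → ℂ) := by
      apply continuous_pi; intro i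
      refine Fin.cases ?_ ?_ i
      · simpa using continuous_snd
      · intro j; simp; exact (continuous_apply j).comp continuous_fst
    set s : Set ((Fin n → ℂ) × ℂ) :=
      {p | MvPolynomial.eval (Fin.cons p.2 p.1 : Fin (n+1) → ℂ) f = 0} with hs
    have hsm : MeasurableSet s :=
      ((MvPolynomial.continuous_eval (p := f)).comp hconsC).measurable
        (measurableSet_singleton 0)
    have hnull : (volume : Measure (Fin n → ℂ)).prod (volume : Measure ℂ) s = 0 := by
      rw [Measure.measure_prod_null hsm]
      have hae : ∀ᵐ y : Fin n → ℂ, MvPolynomial.eval y g.leadingCoeff ≠ 0 := by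
        rw [ae_iff]
        simpa using ih g.leadingCoeff (Polynomial.leadingCoeff_ne_zero.mpr hgne)
      filter_upwards [hae] with y hy
      have hmapne : g.map (MvPolynomial.eval y) ≠ 0 := by
        intro hzero
        apply hy
        have h1 : (g.map (MvPolynomial.eval y)).coeff g.natDegree = 0 := by
          rw [hzero]; simp
        rw [Polynomial.coeff_map] at h1
        rw [Polynomial.leadingCoeff]
        exact h1
      have : Prod.mk y ⁻¹' s = {x : ℂ | Polynomial.IsRoot (g.map (MvPolynomial.eval y)) x} := by
        ext x
        simp only [hs, Set.mem_preimage, Set.mem_setOf_eq, Polynomial.IsRoot]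
        rw [MvPolynomial.eval_eq_eval_mv_eval']
      simp only [Pi.zero_apply]
      rw [this]
      exact (Polynomial.finite_setOf_isRoot hmapne).measure_zero _
    -- transfer via the measurable equivalence
    set e := MeasurableEquiv.piFinSuccAbove (fun _ : Fin (n+1) => ℂ) 0 with he
    have hmp := volume_preserving_piFinSuccAbove (fun _ : Fin (n+1) => ℂ) 0
    set S' : Set (ℂ × (Fin n → ℂ)) :=
      {q | MvPolynomial.eval (Fin.cons q.1 q.2 : Fin (n+1) → ℂ) f = 0} with hS'
    have hS'm : MeasurableSet S' := by
      have : S' = Prod.swap ⁻¹' s := by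
        ext q; simp [hS', hs, Prod.swap]
      rw [this]; exact hsm.preimage measurable_swap
    have hS'0 : ((volume : Measure ℂ).prod (volume : Measure (Fin n → ℂ))) S' = 0 := by
      have hswap : S' = Prod.swap ⁻¹' s := by ext q; simp [hS', hs, Prod.swap]
      calc ((volume : Measure ℂ).prod volume) S'
          = ((volume : Measure ℂ).prod volume) (Prod.swap ⁻¹' s) := by rw [hswap]
        _ = (Measure.map Prod.swap ((volume : Measure ℂ).prod volume)) s := by
            rw [Measure.map_apply measurable_swap hsm]
        _ = ((volume : Measure (Fin n → ℂ)).prod volume) s := by rw [Measure.prod_swap]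
        _ = 0 := hnull
    have key : ∀ z : Fin (n+1) → ℂ,
        (Fin.cons ((Fin.insertNthEquiv (fun _ : Fin (n+1) => ℂ) 0).symm z).1
          ((Fin.insertNthEquiv (fun _ : Fin (n+1) => ℂ) 0).symm z).2 : Fin (n+1) → ℂ) = z := by
      intro z
      have h2 := (Fin.insertNthEquiv (fun _ : Fin (n+1) => ℂ) 0).apply_symm_apply z
      rwa [show ∀ q : ℂ × (Fin n → ℂ), (Fin.insertNthEquiv (fun _ : Fin (n+1) => ℂ) 0) q
          = Fin.insertNth 0 q.1 q.2 from fun q => rfl, Fin.insertNth_zero] at h2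
    have hpre : {z : Fin (n+1) → ℂ | MvPolynomial.eval z f = 0} = e ⁻¹' S' := by
      ext z
      simp only [Set.mem_setOf_eq, Set.mem_preimage, he,
        MeasurableEquiv.piFinSuccAbove_apply, hS']
      rw [key z]
    rw [hpre]
    rw [hmp.measure_preimage hS'm.nullMeasurableSet]
    exact hS'0

section aux
variable {n : ℕ} (w : Fin n → ℕ)

/-- the weighted closed polydisc of "radius" `t` -/
def wBox (t : ℝ) : Set (Fin n → ℂ) :=
  Set.pi Set.univ fun i => Metric.closedBall (0 : ℂ) (t ^ (w i))

lemma wBox_measurable (t : ℝ) : MeasurableSet (wBox w t) :=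
  MeasurableSet.univ_pi fun _ => measurableSet_closedBall

lemma wBox_mono {s t : ℝ} (hs : 0 ≤ s) (hst : s ≤ t) : wBox w s ⊆ wBox w t := by
  refine Set.pi_mono fun i _ => Metric.closedBall_subset_closedBall ?_
  exact pow_le_pow_left₀ hs hst _

lemma wBox_volume (t : ℝ) (ht : 0 ≤ t) :
    volume (wBox w t) = ENNReal.ofReal (Real.pi ^ n * t ^ (2 * ∑ i, w i)) := by
  rw [wBox, volume_pi_pi]
  have h1 : ∀ i : Fin n, volume (Metric.closedBall (0:ℂ) (t ^ w i))
      = ENNReal.ofReal ((t ^ w i) ^ 2 * Real.pi) := by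
    intro i
    rw [Complex.volume_closedBall]
    have hpi : (NNReal.pi : ℝ≥0∞) = ENNReal.ofReal Real.pi := by
      rw [← NNReal.coe_real_pi, ENNReal.ofReal_coe_nnreal]
    rw [hpi, ← ENNReal.ofReal_pow (by positivity), ← ENNReal.ofReal_mul (by positivity)]
  simp_rw [h1]
  rw [← ENNReal.ofReal_prod_of_nonneg (fun i _ => by positivity)]
  congr 1
  rw [Finset.prod_mul_distrib, Finset.prod_const]
  simp_rw [← pow_mul]
  rw [Finset.prod_pow_eq_pow_sum, Finset.card_univ, Fintype.card_fin]
  rw [show ∑ i : Fin n, w i * 2 = 2 * ∑ i : Fin n, w i by rw [← Finset.sum_mul, mul_comm]]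
  ring

lemma wBox_eval_bound (f : MvPolynomial (Fin n) ℂ) (m : ℕ)
    (hm_le : ∀ α ∈ f.support, m ≤ ∑ i, w i * α i)
    {t : ℝ} (ht0 : 0 ≤ t) (ht1 : t ≤ 1) {z : Fin n → ℂ} (hz : z ∈ wBox w t) :
    ‖MvPolynomial.eval z f‖
      ≤ (∑ α ∈ f.support, ‖MvPolynomial.coeff α f‖) * t ^ m := by
  rw [MvPolynomial.eval_eq']
  refine le_trans (norm_sum_le _ _) ?_
  rw [Finset.sum_mul]
  refine Finset.sum_le_sum fun α hα => ?_
  rw [norm_mul]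
  refine mul_le_mul_of_nonneg_left ?_ (norm_nonneg _)
  rw [norm_prod]
  have step1 : ∏ i, ‖z i ^ α i‖ ≤ ∏ i, (t ^ w i) ^ α i := by
    refine Finset.prod_le_prod (fun i _ => by positivity) fun i _ => ?_
    rw [norm_pow]
    refine pow_le_pow_left₀ (norm_nonneg _) ?_ _
    have := hz i (Set.mem_univ i)
    rwa [Metric.mem_closedBall, Complex.dist_eq, sub_zero] at this
  refine le_trans step1 ?_
  simp_rw [← pow_mul]
  rw [Finset.prod_pow_eq_pow_sum]
  exact pow_le_pow_of_le_one ht0 ht1 (hm_le α hα)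

end aux

theorem stmt_10 (n : ℕ) (hn : 1 ≤ n) (f : MvPolynomial (Fin n) ℂ) (hf : f ≠ 0)
    (hf0 : MvPolynomial.eval (0 : Fin n → ℂ) f = 0)
    (w : Fin n → ℕ) (hw : ∀ i, 0 < w i) (m : ℕ)
    (hm_le : ∀ α ∈ f.support, m ≤ ∑ i, w i * α i)
    (hm_mem : ∃ α ∈ f.support, ∑ i, w i * α i = m)
    (lam : ℝ) (hlam : (∑ i, (w i : ℝ)) / (m : ℝ) < lam)
    (U : Set (Fin n → ℂ)) (hU : IsOpen U) (h0 : (0 : Fin n → ℂ) ∈ U) :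
    ¬ IntegrableOn
      (fun z : Fin n → ℂ => ‖MvPolynomial.eval z f‖ ^ (-2 * lam))
      U volume := by
  intro hInt
  haveI : NeZero n := ⟨by omega⟩
  set W : ℕ := ∑ i, w i with hW
  have hWpos : 0 < W := Finset.sum_pos (fun i _ => hw i) Finset.univ_nonempty
  -- m ≥ 1
  have hmpos : 0 < m := by
    obtain ⟨α, hαs, hαm⟩ := hm_mem
    have hα0 : α ≠ 0 := by
      rintro rfl
      rw [MvPolynomial.eval_zero] at hf0
      exact MvPolynomial.mem_support_iff.mp hαs hf0
    obtain ⟨i, hi⟩ := Finsupp.ne_iff.mp hα0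
    simp only [Finsupp.coe_zero, Pi.zero_apply] at hi
    have h1 : 0 < w i * α i := Nat.mul_pos (hw i) (Nat.pos_of_ne_zero hi)
    calc 0 < w i * α i := h1
      _ ≤ ∑ j, w j * α j := Finset.single_le_sum (f := fun j => w j * α j)
          (fun j _ => Nat.zero_le _) (Finset.mem_univ i)
      _ = m := hαm
  -- the key real inequality on exponents
  have hexp : (m : ℝ) * (-2 * lam) + (2 * W : ℕ) ≤ 0 := by
    have hm' : (0:ℝ) < m := by exact_mod_cast hmpos
    have h1 : (∑ i, (w i : ℝ)) = (W : ℝ) := by rw [hW]; push_cast; ring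
    rw [h1] at hlam
    have h2 : (W : ℝ) < lam * m := (div_lt_iff₀ hm').mp hlam
    push_cast
    nlinarith
  -- the constant C
  set C : ℝ := ∑ α ∈ f.support, ‖MvPolynomial.coeff α f‖ with hC
  have hCpos : 0 < C := by
    refine Finset.sum_pos (fun α hα => ?_) (MvPolynomial.support_nonempty.mpr hf)
    exact norm_pos_iff.mpr (MvPolynomial.mem_support_iff.mp hα)
  -- choose the scale T
  obtain ⟨ε, hε, hball⟩ := Metric.isOpen_iff.mp hU 0 h0
  set T : ℝ := min 1 (ε / 2) with hT
  have hT0 : 0 < T := lt_min one_pos (by positivity)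
  have hT1 : T ≤ 1 := min_le_left _ _
  have hTU : wBox w T ⊆ U := by
    refine fun z hz => hball ?_
    rw [Metric.mem_ball, dist_pi_lt_iff hε]
    intro i
    have := hz i (Set.mem_univ i)
    rw [Metric.mem_closedBall] at this
    have h2 : T ^ w i ≤ T := pow_le_of_le_one hT0.le hT1 (hw i).ne'
    have h3 : T ≤ ε / 2 := min_le_right _ _
    calc dist (z i) 0 ≤ T ^ w i := this
      _ ≤ T := h2
      _ ≤ ε / 2 := h3
      _ < ε := by linarith
  -- the scales and annuli
  set s : ℕ → ℝ := fun k => T * (1 / 2) ^ k with hs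
  have hs0 : ∀ k, 0 < s k := fun k => by positivity
  have hs1 : ∀ k, s k ≤ 1 := fun k => by
    calc s k ≤ T * 1 := by
          refine mul_le_mul_of_nonneg_left ?_ hT0.le
          exact pow_le_one₀ (by norm_num) (by norm_num)
      _ = T := mul_one T
      _ ≤ 1 := hT1
  have hsmono : ∀ j k, j ≤ k → s k ≤ s j := fun j k hjk => by
    refine mul_le_mul_of_nonneg_left ?_ hT0.le
    exact pow_le_pow_of_le_one (by norm_num) (by norm_num) hjk
  have hs_succ : ∀ k, s (k + 1) = s k * (1 / 2) := fun k => by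
    simp only [hs]; ring
  set A : ℕ → Set (Fin n → ℂ) := fun k => wBox w (s k) \ wBox w (s (k + 1)) with hA
  have hAm : ∀ k, MeasurableSet (A k) := fun k =>
    (wBox_measurable w _).diff (wBox_measurable w _)
  have hAsub : ∀ k, A k ⊆ wBox w (s k) := fun k => Set.diff_subset
  have hsT : ∀ k, s k ≤ T := fun k => by
    have := hsmono 0 k (Nat.zero_le k)
    simpa [hs] using this
  have hAU : ∀ k, A k ⊆ U := fun k =>
    (hAsub k).trans ((wBox_mono w (hs0 k).le (hsT k)).trans hTU)
  have hAdisj : Pairwise (Function.onFun Disjoint A) := by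
    have key : ∀ j k, j < k → Disjoint (A j) (A k) := by
      intro j k h
      refine Set.disjoint_left.mpr fun z hzj hzk => ?_
      exact hzj.2 (wBox_mono w (hs0 k).le (hsmono (j+1) k h) (hAsub k hzk))
    intro j k hjk
    rcases lt_or_gt_of_ne hjk with h | h
    · exact key j k h
    · exact (key k j h).symm
  -- volume of the annuli
  have hvolB : ∀ k, volume (wBox w (s k)) = ENNReal.ofReal (Real.pi ^ n * s k ^ (2 * W)) :=
    fun k => wBox_volume w _ (hs0 k).le
  have hvolA : ∀ k, volume (A k)
      = ENNReal.ofReal (Real.pi ^ n * (s k ^ (2 * W) - s (k+1) ^ (2 * W))) := by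
    intro k
    rw [hA]
    rw [measure_diff (wBox_mono w (hs0 (k+1)).le (hsmono k (k+1) (by omega)))
      (wBox_measurable w _).nullMeasurableSet
      (by rw [hvolB (k+1)]; exact ENNReal.ofReal_ne_top)]
    rw [hvolB k, hvolB (k+1), ← ENNReal.ofReal_sub _ (by positivity)]
    congr 1
    ring
  -- pointwise lower bound constant
  set δ : ℝ := C ^ (-2 * lam) * (Real.pi ^ n * (1 - (1/2 : ℝ) ^ (2 * W))) with hδ
  have hhalf : (1/2 : ℝ) ^ (2 * W) < 1 :=
    pow_lt_one₀ (by norm_num) (by norm_num) (by omega)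
  have hδpos : 0 < δ := by
    have h1 : (0:ℝ) < 1 - (1/2 : ℝ) ^ (2 * W) := by linarith
    exact mul_pos (Real.rpow_pos_of_pos hCpos _)
      (mul_pos (pow_pos Real.pi_pos n) h1)
  -- per-annulus lower bound on the lintegral
  have hZ : volume {z : Fin n → ℂ | MvPolynomial.eval z f = 0} = 0 :=
    mv_zero_set_null n f hf
  set F : (Fin n → ℂ) → ℝ :=
    fun z => ‖MvPolynomial.eval z f‖ ^ (-2 * lam) with hF
  have hFmeas : Measurable fun z => (‖F z‖₊ : ℝ≥0∞) := by
    have h1 : Continuous fun z : Fin n → ℂ => ‖MvPolynomial.eval z f‖ := by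
      exact (MvPolynomial.continuous_eval f).norm
    exact (h1.measurable.pow measurable_const).nnnorm.coe_nnreal_ennreal
  have hannulus : ∀ k, ENNReal.ofReal δ ≤ ∫⁻ z in A k, (‖F z‖₊ : ℝ≥0∞) ∂volume := by
    intro k
    set b : ℝ := (C * s k ^ m) ^ (-2 * lam) with hb
    -- real inequality : δ ≤ b * (π^n (s_k^{2W} - s_{k+1}^{2W}))
    have hreal : δ ≤ b * (Real.pi ^ n * (s k ^ (2 * W) - s (k+1) ^ (2 * W))) := by
      have hsk := hs0 k
      have hb_eq : b = C ^ (-2 * lam) * (s k ^ m : ℝ) ^ (-2 * lam) :=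
        Real.mul_rpow hCpos.le (by positivity)
      have hfac : (1:ℝ) ≤ (s k ^ m : ℝ) ^ (-2 * lam) * s k ^ (2 * W) := by
        have h1 : (s k ^ m : ℝ) ^ (-2 * lam) = s k ^ ((m : ℝ) * (-2 * lam)) := by
          rw [← Real.rpow_natCast (s k) m, ← Real.rpow_mul hsk.le]
        have h2 : (s k ^ (2 * W) : ℝ) = s k ^ ((2 * W : ℕ) : ℝ) :=
          (Real.rpow_natCast _ _).symm
        rw [h1, h2, ← Real.rpow_add hsk]
        exact Real.one_le_rpow_of_pos_of_le_one_of_nonpos hsk (hs1 k) hexp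
      have hsub : s k ^ (2 * W) - s (k+1) ^ (2 * W)
          = s k ^ (2 * W) * (1 - (1/2 : ℝ) ^ (2 * W)) := by
        rw [hs_succ k, mul_pow]; ring
      rw [hsub, hb_eq, hδ]
      calc C ^ (-2 * lam) * (Real.pi ^ n * (1 - (1/2 : ℝ) ^ (2 * W)))
          = C ^ (-2 * lam) * (Real.pi ^ n * (1 - (1/2 : ℝ) ^ (2 * W))) * 1 := by ring
        _ ≤ C ^ (-2 * lam) * (Real.pi ^ n * (1 - (1/2 : ℝ) ^ (2 * W)))
            * ((s k ^ m : ℝ) ^ (-2 * lam) * s k ^ (2 * W)) := by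
            refine mul_le_mul_of_nonneg_left hfac ?_
            have h3 := Real.rpow_pos_of_pos hCpos (-2 * lam)
            have h4 := Real.pi_pos
            positivity
        _ = C ^ (-2 * lam) * (s k ^ m : ℝ) ^ (-2 * lam)
            * (Real.pi ^ n * (s k ^ (2 * W) * (1 - (1/2 : ℝ) ^ (2 * W)))) := by ring
    -- now the measure-theoretic part
    have hAZ : volume (A k \ {z | MvPolynomial.eval z f = 0}) = volume (A k) :=
      measure_diff_null hZ
    have hpt : ∀ z ∈ A k \ {z | MvPolynomial.eval z f = 0},
        ENNReal.ofReal b ≤ (‖F z‖₊ : ℝ≥0∞) := by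
      rintro z ⟨hzA, hzZ⟩
      have hzne : MvPolynomial.eval z f ≠ 0 := hzZ
      have habs : 0 < ‖MvPolynomial.eval z f‖ :=
        norm_pos_iff.mpr hzne
      have hub : ‖MvPolynomial.eval z f‖ ≤ C * s k ^ m :=
        wBox_eval_bound w f m hm_le (hs0 k).le (hs1 k) (hAsub k hzA)
      have h5 : b ≤ F z :=
        Real.rpow_le_rpow_of_nonpos habs hub (by
          have hlam0 : (0:ℝ) < lam := lt_of_le_of_lt (by positivity) hlam
          linarith)
      show _ ≤ ‖F z‖ₑ
      rw [Real.enorm_eq_ofReal (Real.rpow_nonneg (norm_nonneg _) _)]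
      exact ENNReal.ofReal_le_ofReal h5
    calc ENNReal.ofReal δ
        ≤ ENNReal.ofReal (b * (Real.pi ^ n * (s k ^ (2 * W) - s (k+1) ^ (2 * W)))) :=
          ENNReal.ofReal_le_ofReal hreal
      _ = ENNReal.ofReal b * volume (A k) := by
          rw [hvolA k, ← ENNReal.ofReal_mul (Real.rpow_nonneg (by positivity) _)]
      _ = ENNReal.ofReal b * volume (A k \ {z | MvPolynomial.eval z f = 0}) := by rw [hAZ]
      _ = ∫⁻ _ in A k \ {z | MvPolynomial.eval z f = 0}, ENNReal.ofReal b ∂volume := by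
          rw [setLIntegral_const]
      _ ≤ ∫⁻ z in A k \ {z | MvPolynomial.eval z f = 0}, (‖F z‖₊ : ℝ≥0∞) ∂volume :=
          setLIntegral_mono hFmeas hpt
      _ ≤ ∫⁻ z in A k, (‖F z‖₊ : ℝ≥0∞) ∂volume :=
          lintegral_mono_set Set.diff_subset
  -- conclude
  have hfin : (∫⁻ z in U, (‖F z‖₊ : ℝ≥0∞) ∂volume) < ⊤ := hInt.2
  have htop : (⊤ : ℝ≥0∞) ≤ ∫⁻ z in U, (‖F z‖₊ : ℝ≥0∞) ∂volume := by
    calc (⊤ : ℝ≥0∞) = ∑' _ : ℕ, ENNReal.ofReal δ :=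
          (ENNReal.tsum_const_eq_top_of_ne_zero
            (by simpa using ENNReal.ofReal_pos.mpr hδpos |>.ne')).symm
      _ ≤ ∑' k, ∫⁻ z in A k, (‖F z‖₊ : ℝ≥0∞) ∂volume := ENNReal.tsum_le_tsum hannulus
      _ = ∫⁻ z in ⋃ k, A k, (‖F z‖₊ : ℝ≥0∞) ∂volume :=
          (lintegral_iUnion hAm hAdisj _).symm
      _ ≤ ∫⁻ z in U, (‖F z‖₊ : ℝ≥0∞) ∂volume :=
          lintegral_mono_set (Set.iUnion_subset hAU)
  exact absurd hfin (not_lt.mpr htop)
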